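/- (Kadison's inequality.) Let T be a linear map from n×n real symmetric matrices to m×m real symmetric matrices such that T maps positive semidefinite matrices to positive semidefinite matrices and T(Iₙ) = Iₘ. Then for every n×n real symmetric matrix X, the matrix T(X²) − (T(X))² is positive semidefinite. -/

import Mathlib

set_option maxHeartbeats 1000000

open Matrix

private lemma diagonal_eq_sum_smul {k : ℕ} (d : Fin k → ℝ) :
    diagonal d = ∑ i, d i • Matrix.single i i (1:ℝ) := by
  ext a b
  simp only [Matrix.sum_apply, Matrix.smul_apply, Matrix.single, of_apply, smul_eq_mul,
    diagonal_apply]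
  by_cases h : a = b
  · subst h; simp
  · rw [if_neg h, Finset.sum_eq_zero]
    intro x _
    rw [if_neg, mul_zero]
    rintro ⟨rfl, rfl⟩; exact h rfl

private lemma block_psd {m : ℕ} {Q : Matrix (Fin m) (Fin m) ℝ} (hQ : Q.PosSemidef) (c : ℝ) :
    (fromBlocks Q (c • Q) (c • Q) ((c*c) • Q)).PosSemidef := by
  have h := hQ.conjTranspose_mul_mul_same
    ((fromCols 1 (c • 1)) : Matrix (Fin m) (Fin m ⊕ Fin m) ℝ)
  convert h using 1
  rw [conjTranspose_fromCols_eq_fromRows_conjTranspose, fromRows_mul, fromRows_mul_fromCols]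
  congr 1 <;>
    simp [Matrix.mul_smul, Matrix.smul_mul, smul_smul, conjTranspose_smul]

private lemma stdBasis_diag {k : ℕ} (i : Fin k) :
    Matrix.single i i (1:ℝ) = diagonal (Pi.single i 1) := by
  ext a b
  simp only [Matrix.single, of_apply, diagonal_apply, Pi.single_apply]
  by_cases h : i = a ∧ i = b
  · obtain ⟨rfl, rfl⟩ := h
    simp
  · rw [if_neg h]
    by_cases hab : a = b
    · subst hab
      have hai : ¬ a = i := fun hh => h ⟨hh.symm, hh.symm⟩
      simp [hai, eq_comm]
    · have h2 : ¬(i = a ∧ i = b) := h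
      simp [hab, h2]

private lemma fromBlocks_sum {k m : ℕ} (A B C D : Fin k → Matrix (Fin m) (Fin m) ℝ) :
    ∑ i, fromBlocks (A i) (B i) (C i) (D i) =
      fromBlocks (∑ i, A i) (∑ i, B i) (∑ i, C i) (∑ i, D i) := by
  ext (a|a) (b|b) <;> simp [Matrix.sum_apply]

/-- Kadison's inequality: if a linear map `T` between spaces of
symmetric matrices maps positive semidefinite matrices to positive semidefinite
matrices and is unital (`T(Iₙ) = Iₘ`), then `T(X²) ⪰ (T(X))²` for every symmetric `X`. -/
theorem kadison_inequality (n m : ℕ)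
    (T : Matrix (Fin n) (Fin n) ℝ →ₗ[ℝ] Matrix (Fin m) (Fin m) ℝ)
    (hTsymm : ∀ X : Matrix (Fin n) (Fin n) ℝ, X.IsSymm → (T X).IsSymm)
    (hTpos : ∀ X : Matrix (Fin n) (Fin n) ℝ, X.PosSemidef → (T X).PosSemidef)
    (hTone : T 1 = 1) :
    ∀ X : Matrix (Fin n) (Fin n) ℝ, X.IsSymm →
      (T (X * X) - (T X) * (T X)).PosSemidef := by
  intro X hX
  have hH : X.IsHermitian := by
    rwa [Matrix.IsHermitian, conjTranspose_eq_transpose_of_trivial]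
  set U : Matrix (Fin n) (Fin n) ℝ := (hH.eigenvectorUnitary : Matrix (Fin n) (Fin n) ℝ) with hU
  set ev : Fin n → ℝ := hH.eigenvalues with hev
  have hUs : U * star U = 1 := (Matrix.mem_unitaryGroup_iff).mp hH.eigenvectorUnitary.2
  have hsU : star U * U = 1 := (Matrix.mem_unitaryGroup_iff').mp hH.eigenvectorUnitary.2
  have hspec : X = U * diagonal ev * star U := by
    have h := hH.spectral_theorem
    rw [RCLike.ofReal_real_eq_id] at h
    simpa using h
  set P : Fin n → Matrix (Fin n) (Fin n) ℝ :=
    fun i => U * Matrix.single i i (1:ℝ) * star U with hP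
  have hconj : ∀ d : Fin n → ℝ,
      U * diagonal d * star U = ∑ i, d i • P i := by
    intro d
    rw [diagonal_eq_sum_smul d, Finset.mul_sum, Finset.sum_mul]
    refine Finset.sum_congr rfl fun i _ => ?_
    rw [hP]
    rw [← Matrix.smul_mul, ← Matrix.mul_smul, smul_single, smul_eq_mul, mul_one]
  have hPpsd : ∀ i, (P i).PosSemidef := by
    intro i
    have h1 : (Matrix.single i i (1:ℝ)).PosSemidef := by
      rw [stdBasis_diag]
      exact posSemidef_diagonal_iff.mpr fun j => by
        by_cases h : j = i <;> simp [Pi.single_apply, h]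
    have := h1.mul_mul_conjTranspose_same U
    simpa [Matrix.star_eq_conjTranspose, hP] using this
  have hPsum : ∑ i, P i = 1 := by
    have : ∑ i, P i = ∑ i, (1:ℝ) • P i := by simp
    rw [this, ← hconj, diagonal_one, mul_one, hUs]
  have hXsum : X = ∑ i, ev i • P i := by rw [hspec, hconj]
  have hX2sum : X * X = ∑ i, (ev i * ev i) • P i := by
    rw [← hconj]
    calc X * X = (U * diagonal ev * star U) * (U * diagonal ev * star U) := by rw [← hspec]
    _ = U * diagonal ev * (star U * U) * diagonal ev * star U := by
        simp only [Matrix.mul_assoc]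
    _ = U * diagonal (ev * ev) * star U := by
        rw [hsU, mul_one]
        simp only [Matrix.mul_assoc, diagonal_mul_diagonal]
        rfl
  set Q : Fin n → Matrix (Fin m) (Fin m) ℝ := fun i => T (P i) with hQ
  have hTX : T X = ∑ i, ev i • Q i := by
    rw [hXsum, map_sum]; simp [hQ]
  have hTX2 : T (X * X) = ∑ i, (ev i * ev i) • Q i := by
    rw [hX2sum, map_sum]; simp [hQ]
  have hQsum : ∑ i, Q i = 1 := by
    rw [hQ]
    simp only []
    rw [← map_sum, hPsum, hTone]
  have hM : (fromBlocks (1 : Matrix (Fin m) (Fin m) ℝ) (T X) (T X) (T (X * X))).PosSemidef := by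
    have heq : fromBlocks (1 : Matrix (Fin m) (Fin m) ℝ) (T X) (T X) (T (X * X)) =
        ∑ i, fromBlocks (Q i) (ev i • Q i) (ev i • Q i) ((ev i * ev i) • Q i) := by
      rw [fromBlocks_sum, hQsum, hTX, hTX2]
    rw [heq]
    apply Finset.sum_induction _ _ (fun a b ha hb => ha.add hb) Matrix.PosSemidef.zero
    intro i _
    exact block_psd (hTpos _ (hPpsd i)) (ev i)
  have hone : (1 : Matrix (Fin m) (Fin m) ℝ).PosDef := Matrix.PosDef.one
  have hTXh : (T X)ᴴ = T X := by
    rw [conjTranspose_eq_transpose_of_trivial]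
    exact hTsymm X hX
  haveI : Invertible (1 : Matrix (Fin m) (Fin m) ℝ) := invertibleOne
  have := (Matrix.PosDef.fromBlocks₁₁ (T X) (T (X * X)) hone).mp (by rwa [hTXh])
  simpa [(hTsymm X hX).eq] using this
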